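/- Let G be a subgroup of Aut(L,<) for a dense linear order L without endpoints, such that G is closed under pointwise max and min (a lattice-ordered permutation group), G acts transitively on L, and G is inclusion-transitive (for all bounded open intervals I, J there exists g ∈ G with g(I) ⊆ J). Then G is highly o-transitive on L: for every n and all a₁ < ⋯ < aₙ and b₁ < ⋯ < bₙ in L there exists g ∈ G with g(aᵢ) = bᵢ for all i. -/

import Mathlib

/-- Key lemma: there is an element of `G` fixing `[u, v]` pointwise and sending `x` to `y`,
whenever `u ≤ v < x, y`. -/
theorem stmt18_key {L : Type*} [LinearOrder L] [DenselyOrdered L] [NoMinOrder L] [NoMaxOrder L]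
    (G : Subgroup (L ≃o L))
    (hsup : ∀ f g : L ≃o L, f ∈ G → g ∈ G → ∃ h ∈ G, ∀ x, h x = max (f x) (g x))
    (hinf : ∀ f g : L ≃o L, f ∈ G → g ∈ G → ∃ h ∈ G, ∀ x, h x = min (f x) (g x))
    (htrans : ∀ a b : L, ∃ g ∈ G, g a = b)
    (hincl : ∀ a b c d : L, a < b → c < d →
      ∃ g ∈ G, (⇑g) '' Set.Ioo a b ⊆ Set.Ioo c d)
    (u v x y : L) (huv : u ≤ v) (hvx : v < x) (hvy : v < y) :
    ∃ h ∈ G, h x = y ∧ ∀ z, u ≤ z → z ≤ v → h z = z := by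
  obtain ⟨f, hfG, hfx⟩ := htrans x y
  rcases lt_trichotomy x y with hxy | hxy | hxy
  · -- x < y : use h = (f ⊓ k) ⊔ 1 where k v ≤ u, k x ≥ y
    obtain ⟨u', hu'⟩ := exists_lt u
    obtain ⟨y', hy'⟩ := exists_gt y
    obtain ⟨g0, hg0G, hg0⟩ := hincl u' y' v x (hu'.trans_le (huv.trans (hvy.le.trans hy'.le)))
      hvx
    set k : L ≃o L := g0⁻¹ with hk
    have hkG : k ∈ G := G.inv_mem hg0G
    have hgu : g0 u ∈ Set.Ioo v x :=
      hg0 (Set.mem_image_of_mem _ ⟨hu', lt_of_le_of_lt (huv.trans hvy.le) hy'⟩)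
    have hgy : g0 y ∈ Set.Ioo v x :=
      hg0 (Set.mem_image_of_mem _ ⟨lt_of_lt_of_le hu' (huv.trans hvy.le), hy'⟩)
    have hkv : k v ≤ u := by
      have : g0.symm v < g0.symm (g0 u) := g0.symm.strictMono hgu.1
      rw [show k v = g0.symm v from rfl]
      simpa using this.le
    have hkx : y ≤ k x := by
      have : g0.symm (g0 y) < g0.symm x := g0.symm.strictMono hgy.2
      rw [show k x = g0.symm x from rfl]
      simpa using this.le
    obtain ⟨m, hmG, hm⟩ := hinf f k hfG hkG
    obtain ⟨h, hhG, hh⟩ := hsup m 1 hmG G.one_mem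
    refine ⟨h, hhG, ?_, ?_⟩
    · rw [hh, hm, hfx, min_eq_left hkx]
      exact max_eq_left hxy.le
    · intro z huz hzv
      rw [hh, hm]
      rw [show (1 : L ≃o L) z = z from rfl]
      have : min (f z) (k z) ≤ z := le_trans (min_le_right _ _)
        (((k : L ≃o L).monotone hzv).trans (hkv.trans huz))
      exact max_eq_right this
  · exact ⟨1, G.one_mem, by simpa using hxy, fun z _ _ => rfl⟩
  · -- y < x : use h = (f ⊔ k) ⊓ 1 where k u ≥ v, k x ≤ y
    obtain ⟨u', hu'⟩ := exists_lt u
    obtain ⟨x', hx'⟩ := exists_gt x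
    obtain ⟨k, hkG, hkim⟩ := hincl u' x' v y (hu'.trans_le (huv.trans (hvx.le.trans hx'.le)))
      hvy
    have hku : v ≤ k u :=
      (hkim (Set.mem_image_of_mem _ ⟨hu', lt_of_le_of_lt (huv.trans hvx.le) hx'⟩)).1.le
    have hkx : k x ≤ y :=
      (hkim (Set.mem_image_of_mem _ ⟨hu'.trans_le (huv.trans hvx.le), hx'⟩)).2.le
    obtain ⟨m, hmG, hm⟩ := hsup f k hfG hkG
    obtain ⟨h, hhG, hh⟩ := hinf m 1 hmG G.one_mem
    refine ⟨h, hhG, ?_, ?_⟩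
    · rw [hh, hm, hfx, max_eq_left hkx]
      exact min_eq_left hxy.le
    · intro z huz hzv
      rw [hh, hm]
      rw [show (1 : L ≃o L) z = z from rfl]
      have : z ≤ max (f z) (k z) := le_trans (hzv.trans (hku.trans (k.monotone huz)))
        (le_max_right _ _)
      exact min_eq_right this

/-- A transitive, inclusion-transitive lattice-ordered group of automorphisms of a dense
linear order without endpoints is highly o-transitive. -/
theorem stmt18 {L : Type*} [LinearOrder L] [DenselyOrdered L] [NoMinOrder L] [NoMaxOrder L]
    (G : Subgroup (L ≃o L))
    (hsup : ∀ f g : L ≃o L, f ∈ G → g ∈ G → ∃ h ∈ G, ∀ x, h x = max (f x) (g x))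
    (hinf : ∀ f g : L ≃o L, f ∈ G → g ∈ G → ∃ h ∈ G, ∀ x, h x = min (f x) (g x))
    (htrans : ∀ a b : L, ∃ g ∈ G, g a = b)
    (hincl : ∀ a b c d : L, a < b → c < d →
      ∃ g ∈ G, (⇑g) '' Set.Ioo a b ⊆ Set.Ioo c d) :
    ∀ n : ℕ, ∀ a b : Fin n → L, StrictMono a → StrictMono b →
      ∃ g ∈ G, ∀ i, g (a i) = b i := by
  intro n
  induction n with
  | zero => exact fun a b _ _ => ⟨1, G.one_mem, fun i => i.elim0⟩
  | succ n ih =>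
    intro a b ha hb
    match n, a, b, ha, hb, ih with
    | 0, a, b, ha, hb, ih =>
      obtain ⟨g, hgG, hg⟩ := htrans (a 0) (b 0)
      exact ⟨g, hgG, fun i => by rw [Fin.fin_one_eq_zero i]; exact hg⟩
    | (n+1), a, b, ha, hb, ih =>
      obtain ⟨g, hgG, hg⟩ := ih (fun i => a i.castSucc) (fun i => b i.castSucc)
        (fun i j hij => ha (Fin.castSucc_lt_castSucc_iff.mpr hij))
        (fun i j hij => hb (Fin.castSucc_lt_castSucc_iff.mpr hij))
      set u : L := b 0
      set v : L := b (Fin.castSucc (Fin.last n))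
      set x : L := g (a (Fin.last (n+1)))
      set y : L := b (Fin.last (n+1))
      have huv : u ≤ v := hb.monotone (Fin.zero_le _)
      have hvx : v < x := by
        have := ha (Fin.castSucc_lt_last (Fin.last n))
        have h2 := g.strictMono this
        rwa [hg (Fin.last n)] at h2
      have hvy : v < y := hb (Fin.castSucc_lt_last (Fin.last n))
      obtain ⟨h, hhG, hhx, hhfix⟩ := stmt18_key G hsup hinf htrans hincl u v x y huv hvx hvy
      refine ⟨h * g, G.mul_mem hhG hgG, fun i => ?_⟩
      refine Fin.lastCases ?_ ?_ i
      · exact hhx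
      · intro j
        have h1 : (h * g) (a j.castSucc) = h (b j.castSucc) := by
          show h (g (a j.castSucc)) = _
          rw [hg j]
        rw [h1]
        exact hhfix _ (hb.monotone (Fin.zero_le _))
          (hb.monotone (Fin.castSucc_le_castSucc_iff.mpr (Fin.le_last j)))
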